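/- Let p be a prime, G a p-group, and let a, y be elements of G such that the subgroup ⟨a, y⟩ is nilpotent of class at most c and a has order dividing p^m. Then [a, y^{p^{m(c-1)}}] = 1, i.e. a commutes with y^{p^{m(c-1)}}. -/

import Mathlib

/-- The commutator `[a,b] = a⁻¹b⁻¹ab`. -/
def cmt {G : Type*} [Group G] (a b : G) : G := a⁻¹ * b⁻¹ * a * b

lemma map_cmt {G H : Type*} [Group G] [Group H] (f : G →* H) (a b : G) :
    f (cmt a b) = cmt (f a) (f b) := by simp [cmt]

lemma cmt_pow_right {G : Type*} [Group G] (a w : G) (h : Commute (cmt a w) w) (k : ℕ) :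
    cmt a (w ^ k) = (cmt a w) ^ k := by
  induction k with
  | zero => simp [cmt]
  | succ n ih =>
    have h1 : cmt a (w ^ (n + 1)) = a⁻¹ * w⁻¹ * a * (cmt a (w ^ n)) * w := by
      simp only [cmt]; group
    rw [h1, ih]
    have h2 : (cmt a w) ^ n * w = w * (cmt a w) ^ n := (h.pow_left n).eq
    calc a⁻¹ * w⁻¹ * a * (cmt a w) ^ n * w
        = a⁻¹ * w⁻¹ * a * ((cmt a w) ^ n * w) := by group
      _ = a⁻¹ * w⁻¹ * a * (w * (cmt a w) ^ n) := by rw [h2]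
      _ = cmt a w * (cmt a w) ^ n := by simp only [cmt]; group
      _ = (cmt a w) ^ (n + 1) := by rw [pow_succ']

lemma cmt_pow_left {G : Type*} [Group G] (a w : G) (h : Commute (cmt a w) a) (k : ℕ) :
    cmt (a ^ k) w = (cmt a w) ^ k := by
  induction k with
  | zero => simp [cmt]
  | succ n ih =>
    have h1 : cmt (a ^ (n + 1)) w = a⁻¹ * (cmt (a ^ n) w) * w⁻¹ * a * w := by
      simp only [cmt]; group
    rw [h1, ih]
    have h2 : a⁻¹ * (cmt a w) ^ n = (cmt a w) ^ n * a⁻¹ := ((h.pow_left n).inv_right).symm.eq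
    calc a⁻¹ * (cmt a w) ^ n * w⁻¹ * a * w
        = ((cmt a w) ^ n * a⁻¹) * w⁻¹ * a * w := by rw [← h2]
      _ = (cmt a w) ^ n * cmt a w := by simp only [cmt]; group
      _ = (cmt a w) ^ (n + 1) := by rw [pow_succ]

lemma cmt_key {Q : Type*} [Group Q] (a w : Q) (n : ℕ)
    (hca : Commute (cmt a w) a) (hcw : Commute (cmt a w) w) (han : a ^ n = 1) :
    cmt a (w ^ n) = 1 := by
  rw [cmt_pow_right a w hcw, ← cmt_pow_left a w hca, han]
  simp [cmt]

open scoped commutatorElement in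
/-- In a `p`-group, if `⟨a,y⟩` is nilpotent of class at most `c` and
`a^(p^m) = 1`, then `[a, y^(p^(m(c-1)))] = 1`. -/
theorem stmt13 {G : Type*} [Group G] (p : ℕ) (hp : p.Prime) (hG : IsPGroup p G)
    (a y : G) (c m : ℕ) (hc : 0 < c) (hm : 0 < m)
    (hnil : lowerCentralSeries (Subgroup.closure ({a, y} : Set G)) c = ⊥)
    (ha : a ^ p ^ m = 1) :
    cmt a (y ^ p ^ (m * (c - 1))) = 1 := by
  set H := Subgroup.closure ({a, y} : Set G) with hH
  have haH : a ∈ H := Subgroup.subset_closure (by simp)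
  have hyH : y ∈ H := Subgroup.subset_closure (by simp)
  set a' : H := ⟨a, haH⟩ with ha'
  set y' : H := ⟨y, hyH⟩ with hy'
  have main : ∀ k : ℕ, cmt a' (y' ^ p ^ (m * k)) ∈ Subgroup.lowerCentralSeries (⊤ : Subgroup H) (k + 1) := by
    intro k
    induction k with
    | zero =>
      rw [lowerCentralSeries_succ]
      simp only [Nat.mul_zero, pow_zero, pow_one]
      have : cmt a' y' = ⁅a'⁻¹, y'⁻¹⁆ := by
        simp [cmt, commutatorElement_def]
      rw [this]
      exact Subgroup.commutator_mem_commutator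
        (by rw [lowerCentralSeries_zero]; exact Subgroup.mem_top _) (Subgroup.mem_top _)
    | succ k ih =>
      set w : H := y' ^ p ^ (m * k) with hw
      set N := Subgroup.lowerCentralSeries (⊤ : Subgroup H) (k + 1 + 1) with hN
      have hmemN : ∀ x : H, ⁅cmt a' w, x⁆ ∈ N := by
        intro x
        rw [hN, lowerCentralSeries_succ]
        exact Subgroup.commutator_mem_commutator ih (Subgroup.mem_top _)
      set π := QuotientGroup.mk' N with hπ
      have hcomm : ∀ x : H, Commute (π (cmt a' w)) (π x) := by
        intro x
        rw [← commutatorElement_eq_one_iff_commute, ← map_commutatorElement]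
        exact (QuotientGroup.eq_one_iff _).mpr (hmemN x)
      have ha'n : a' ^ p ^ m = 1 := by
        apply Subtype.ext
        push_cast
        exact ha
      have hq : π (cmt a' (w ^ p ^ m)) = 1 := by
        rw [map_cmt, map_pow]
        refine cmt_key (π a') (π w) (p ^ m) ?_ ?_ ?_
        · rw [← map_cmt]; exact hcomm a'
        · rw [← map_cmt]; exact hcomm w
        · rw [← map_pow, ha'n, map_one]
      have hmem : cmt a' (w ^ p ^ m) ∈ N := (QuotientGroup.eq_one_iff _).mp hq
      have hpow : w ^ p ^ m = y' ^ p ^ (m * (k + 1)) := by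
        rw [hw, ← pow_mul, ← pow_add]
        ring_nf
      rw [← hpow]
      exact hmem
  have h := main (c - 1)
  have hnil' : Subgroup.lowerCentralSeries (⊤ : Subgroup H) c = ⊥ := by
    rw [← Subgroup.map_eq_bot_iff_of_injective _ H.subtype_injective,
      Subgroup.top_subtype_lowerCentralSeries]
    exact hnil
  rw [Nat.sub_add_cancel hc, hnil', Subgroup.mem_bot] at h
  have := congrArg (Subgroup.subtype H) h
  rw [map_cmt, map_pow, map_one] at this
  exact this
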